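/- Deterministic ℓ₂-error bound for the fusion lasso under a restricted-eigenvalue condition: Let X ∈ ℝ^{N×p}, ỹ ∈ ℝ^N, λ > 0, β* ∈ ℝ^p, and S ⊆ {1,…,p}. Let β̂ minimize F(β) = (1/(2N))‖ỹ − Xβ‖₂² + λ‖β‖₁ over ℝ^p, set û = β̂ − β* and Σ̂ = X^⊤X/N, and assume ‖(1/N) X^⊤(ỹ − Xβ*)‖∞ ≤ λ/2. Suppose in addition that there are κ > 0 and φ ≥ 0 such that u^⊤ Σ̂ u ≥ κ‖u‖₂² − φ‖u‖₁² for all u ∈ ℝ^p, and that 98 φ |S| ≤ κ. Then ‖û‖₂² ≤ max{ 144 λ² |S| / κ², (6 λ ‖β*_{S^c}‖₁ + 49 φ ‖β*_{S^c}‖₁²) / κ }. -/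

import Mathlib

/-!
STATEMENT 5: Deterministic ℓ₂-error bound for the fusion lasso under a
restricted-eigenvalue condition.

Under the basic-inequality hypotheses (lasso minimizer `βhat`, event
`E₁ : ‖(1/N)Xᵀ(ytil − Xβ*)‖∞ ≤ λ/2`), if moreover
`uᵀΣ̂u ≥ κ‖u‖₂² − φ‖u‖₁²` for all `u` (restricted-eigenvalue-type inequality,
`κ > 0`, `φ ≥ 0`) and `98 φ |S| ≤ κ`, then for `û = βhat − βstar`:
`‖û‖₂² ≤ max{144 λ²|S|/κ², (6λ‖β*_{Sᶜ}‖₁ + 49φ‖β*_{Sᶜ}‖₁²)/κ}`.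
-/

open Matrix Finset

noncomputable section

def l1 {ι : Type*} [Fintype ι] (v : ι → ℝ) : ℝ := ∑ j, |v j|
def l2sq {ι : Type*} [Fintype ι] (v : ι → ℝ) : ℝ := ∑ j, (v j) ^ 2
def linf {ι : Type*} [Fintype ι] (v : ι → ℝ) : ℝ := ⨆ j, |v j|
def restr {p : ℕ} (S : Finset (Fin p)) (v : Fin p → ℝ) : Fin p → ℝ :=
  fun j => if j ∈ S then v j else 0

lemma l1_nonneg {ι : Type*} [Fintype ι] (v : ι → ℝ) : 0 ≤ l1 v :=
  Finset.sum_nonneg fun j _ => abs_nonneg _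

lemma l2sq_nonneg {ι : Type*} [Fintype ι] (v : ι → ℝ) : 0 ≤ l2sq v :=
  Finset.sum_nonneg fun j _ => sq_nonneg _

lemma l1_restr_sum {p : ℕ} (S : Finset (Fin p)) (v : Fin p → ℝ) :
    l1 (restr S v) = ∑ j ∈ S, |v j| := by
  simp only [l1, restr, apply_ite abs, abs_zero]
  simp [Finset.sum_ite_mem]

lemma l1_restr_sq_le {p : ℕ} (S : Finset (Fin p)) (v : Fin p → ℝ) :
    (l1 (restr S v)) ^ 2 ≤ (S.card : ℝ) * l2sq v := by
  rw [l1_restr_sum]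
  have h2 := Finset.sum_mul_sq_le_sq_mul_sq S (fun _ => (1:ℝ)) (fun j => |v j|)
  simp only [one_mul, one_pow, sq_abs, Finset.sum_const, nsmul_eq_mul, mul_one] at h2
  calc (∑ j ∈ S, |v j|) ^ 2 ≤ (S.card : ℝ) * ∑ j ∈ S, (v j) ^ 2 := h2
    _ ≤ (S.card : ℝ) * l2sq v := by
        apply mul_le_mul_of_nonneg_left _ (Nat.cast_nonneg _)
        exact Finset.sum_le_sum_of_subset_of_nonneg (Finset.subset_univ _)
          (fun j _ _ => sq_nonneg _)

lemma dot_le_linf_l1 {ι : Type*} [Fintype ι] (v u : ι → ℝ) :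
    v ⬝ᵥ u ≤ linf v * l1 u := by
  calc v ⬝ᵥ u = ∑ j, v j * u j := rfl
    _ ≤ ∑ j, |v j| * |u j| := Finset.sum_le_sum fun j _ => by
        calc v j * u j ≤ |v j * u j| := le_abs_self _
          _ = |v j| * |u j| := abs_mul _ _
    _ ≤ ∑ j, linf v * |u j| := Finset.sum_le_sum fun j _ =>
        mul_le_mul_of_nonneg_right
          (le_ciSup (f := fun j => |v j|) (Set.Finite.bddAbove (Set.finite_range _)) j)
          (abs_nonneg _)
    _ = linf v * l1 u := by rw [l1, Finset.mul_sum]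

lemma l2sq_sub {ι : Type*} [Fintype ι] (a b : ι → ℝ) :
    l2sq (a - b) = l2sq a - 2 * (a ⬝ᵥ b) + l2sq b := by
  simp only [l2sq, dotProduct, Pi.sub_apply]
  rw [Finset.mul_sum, ← Finset.sum_sub_distrib, ← Finset.sum_add_distrib]
  exact Finset.sum_congr rfl fun i _ => by ring

lemma quad_form_eq {n m : ℕ} (A : Matrix (Fin n) (Fin m) ℝ) (c : ℝ) (u : Fin m → ℝ) :
    u ⬝ᵥ ((c • (Aᵀ * A)) *ᵥ u) = c * l2sq (A *ᵥ u) := by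
  rw [smul_mulVec, dotProduct_smul, ← mulVec_mulVec, dotProduct_mulVec,
    vecMul_transpose]
  simp [l2sq, dotProduct, sq]

lemma dot_transpose {n m : ℕ} (A : Matrix (Fin n) (Fin m) ℝ) (v : Fin n → ℝ) (u : Fin m → ℝ) :
    v ⬝ᵥ (A *ᵥ u) = (Aᵀ *ᵥ v) ⬝ᵥ u := by
  rw [dotProduct_mulVec, mulVec_transpose]



lemma endgame (lam κ φ s T x w b Q : ℝ) (hlam : 0 < lam) (hκ : 0 < κ) (hφ : 0 ≤ φ)
    (hx0 : 0 ≤ x) (hw0 : 0 ≤ w) (hb0 : 0 ≤ b) (hT0 : 0 ≤ T) (hs0 : 0 ≤ s)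
    (hsparse : 98 * φ * s ≤ κ) (hQ0 : 0 ≤ Q)
    (Hup : Q ≤ 3 * lam * x - lam * w + 4 * lam * b)
    (H1 : κ * T - φ * (x + w) ^ 2 ≤ Q) (H4 : x ^ 2 ≤ s * T) :
    T ≤ max (144 * lam ^ 2 * s / κ ^ 2) ((6 * lam * b + 49 * φ * b ^ 2) / κ) := by
  have hst : 98 * φ * s * T ≤ κ * T := mul_le_mul_of_nonneg_right hsparse hT0
  have hφx : φ * x ^ 2 ≤ φ * (s * T) := mul_le_mul_of_nonneg_left H4 hφ
  by_cases hc1 : φ * (2 * x + w) ≤ lam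
  · have hA : κ * T ≤ φ * x ^ 2 + 3 * lam * x + 4 * lam * b := by
      nlinarith [H1, Hup, mul_nonneg hw0 (sub_nonneg.2 hc1)]
    by_cases hc2 : 3 * x ≤ 2 * b
    · refine le_max_of_le_right ?_
      rw [le_div_iff₀ hκ]
      have hx2b : x ^ 2 ≤ 49 * b ^ 2 := by nlinarith [hc2, hx0, hb0]
      nlinarith [hA, mul_le_mul_of_nonneg_left hx2b hφ,
        mul_le_mul_of_nonneg_left hc2 hlam.le]
    · push_neg at hc2
      refine le_max_of_le_left ?_
      rw [le_div_iff₀ (by positivity : (0:ℝ) < κ ^ 2)]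
      have hlb : lam * (2 * b) ≤ lam * (3 * x) := mul_le_mul_of_nonneg_left hc2.le hlam.le
      have h9 : 97 * (κ * T) ≤ 882 * (lam * x) := by nlinarith [hA, hφx, hst, hlb]
      have h0 : 0 ≤ 97 * (κ * T) := by positivity
      have hsq : (97 * (κ * T)) ^ 2 ≤ (882 * (lam * x)) ^ 2 := pow_le_pow_left₀ h0 h9 2
      have hx4 : lam ^ 2 * x ^ 2 ≤ lam ^ 2 * (s * T) :=
        mul_le_mul_of_nonneg_left H4 (sq_nonneg _)
      rcases eq_or_lt_of_le hT0 with h | h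
      · rw [← h, zero_mul]; positivity
      · nlinarith [hsq, h, hx4, mul_nonneg (mul_nonneg (sq_nonneg lam) hs0) hT0]
  · push_neg at hc1
    refine le_max_of_le_right ?_
    rw [le_div_iff₀ hκ]
    have hW0 : (0:ℝ) ≤ 3 * x + 4 * b := by linarith
    have hwW : w ≤ 3 * x + 4 * b := by
      nlinarith [hQ0, Hup, hlam]
    have hB : κ * T ≤ 16 * φ * (x + b) ^ 2 := by
      nlinarith [H1, Hup, mul_nonneg (sub_nonneg.2 hwW) (sub_nonneg.2 hc1.le),
        mul_nonneg (mul_nonneg hφ (sub_nonneg.2 hwW)) hW0]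
    linarith [hB, hφx, hst, mul_nonneg hφ (sq_nonneg (x - b)),
      mul_nonneg hlam.le hb0, mul_nonneg hφ (sq_nonneg b)]


theorem fusion_lasso_l2_error_bound_RE
    {N p : ℕ} (X : Matrix (Fin N) (Fin p) ℝ) (ytil : Fin N → ℝ)
    (lam : ℝ) (hlam : 0 < lam)
    (βstar βhat : Fin p → ℝ) (S : Finset (Fin p))
    (hmin : ∀ β : Fin p → ℝ,
      (1 / (2 * (N : ℝ))) * l2sq (ytil - X *ᵥ βhat) + lam * l1 βhat ≤
      (1 / (2 * (N : ℝ))) * l2sq (ytil - X *ᵥ β) + lam * l1 β)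
    (hE1 : linf ((N : ℝ)⁻¹ • (Xᵀ *ᵥ (ytil - X *ᵥ βstar))) ≤ lam / 2)
    (κ φ : ℝ) (hκ : 0 < κ) (hφ : 0 ≤ φ)
    (hRE : ∀ u : Fin p → ℝ,
      κ * l2sq u - φ * (l1 u) ^ 2 ≤ u ⬝ᵥ (((N : ℝ)⁻¹ • (Xᵀ * X)) *ᵥ u))
    (hsparse : 98 * φ * (S.card : ℝ) ≤ κ) :
    l2sq (βhat - βstar) ≤
      max (144 * lam ^ 2 * (S.card : ℝ) / κ ^ 2)
        ((6 * lam * l1 (restr Sᶜ βstar) + 49 * φ * (l1 (restr Sᶜ βstar)) ^ 2) / κ) := by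
  set u : Fin p → ℝ := βhat - βstar with hu
  set r : Fin N → ℝ := ytil - X *ᵥ βstar with hr
  set T : ℝ := l2sq u with hT
  set s : ℝ := (S.card : ℝ) with hs
  set b : ℝ := l1 (restr Sᶜ βstar) with hb
  set x : ℝ := l1 (restr S u) with hx
  set w : ℝ := l1 (restr Sᶜ u) with hw
  have hx0 : 0 ≤ x := l1_nonneg _
  have hw0 : 0 ≤ w := l1_nonneg _
  have hb0 : 0 ≤ b := l1_nonneg _
  have hT0 : 0 ≤ T := l2sq_nonneg _
  have hs0 : 0 ≤ s := Nat.cast_nonneg _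
  -- l1 u splits
  have hxS : x = ∑ j ∈ S, |u j| := l1_restr_sum S u
  have hwS : w = ∑ j ∈ Sᶜ, |u j| := l1_restr_sum Sᶜ u
  have hbS : b = ∑ j ∈ Sᶜ, |βstar j| := l1_restr_sum Sᶜ βstar
  have hsplit : ∀ v : Fin p → ℝ, l1 v = ∑ j ∈ S, |v j| + ∑ j ∈ Sᶜ, |v j| :=
    fun v => (Finset.sum_add_sum_compl S _).symm
  have hlu : l1 u = x + w := by rw [hsplit u, hxS, hwS]
  -- quadratic form
  have hQeq : u ⬝ᵥ (((N : ℝ)⁻¹ • (Xᵀ * X)) *ᵥ u) = (N : ℝ)⁻¹ * l2sq (X *ᵥ u) :=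
    quad_form_eq X _ u
  have hQ0 : 0 ≤ u ⬝ᵥ (((N : ℝ)⁻¹ • (Xᵀ * X)) *ᵥ u) := by
    rw [hQeq]
    exact mul_nonneg (by positivity) (l2sq_nonneg _)
  -- decomposition inequality
  have hdecomp : l1 βstar - l1 βhat ≤ x + 2 * b - w := by
    have hS1 : ∑ j ∈ S, |βstar j| - ∑ j ∈ S, |βhat j| ≤ ∑ j ∈ S, |u j| := by
      rw [← Finset.sum_sub_distrib]
      apply Finset.sum_le_sum
      intro j _
      have h1 : |βstar j| - |βhat j| ≤ |βstar j - βhat j| := abs_sub_abs_le_abs_sub _ _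
      have h2 : u j = βhat j - βstar j := rfl
      rw [h2, abs_sub_comm]
      exact h1
    have hS2 : ∑ j ∈ Sᶜ, |βstar j| - ∑ j ∈ Sᶜ, |βhat j| ≤
        ∑ j ∈ Sᶜ, (2 * |βstar j| - |u j|) := by
      rw [← Finset.sum_sub_distrib]
      apply Finset.sum_le_sum
      intro j _
      have h2 : u j = βhat j - βstar j := rfl
      have h3 : |βhat j - βstar j| ≤ |βhat j| + |βstar j| := abs_sub _ _
      rw [h2]; linarith
    have hS2' : ∑ j ∈ Sᶜ, (2 * |βstar j| - |u j|) = 2 * b - w := by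
      rw [Finset.sum_sub_distrib, hbS, hwS, Finset.mul_sum]
    rw [hsplit βstar, hsplit βhat, hxS]
    rw [hS2'] at hS2
    linarith
  -- KEY basic inequality
  have hKEY : u ⬝ᵥ (((N : ℝ)⁻¹ • (Xᵀ * X)) *ᵥ u) ≤
      lam * l1 u + 2 * lam * (l1 βstar - l1 βhat) := by
    rcases Nat.eq_zero_or_pos N with hN | hN
    · subst hN
      have h0 : ((0 : ℕ) : ℝ)⁻¹ = 0 := by norm_num
      have hb' := hmin βstar
      simp only [Nat.cast_zero, mul_zero, div_zero, zero_mul, zero_add] at hb'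
      have hl : l1 βhat ≤ l1 βstar := le_of_mul_le_mul_left hb' hlam
      rw [hQeq, h0, zero_mul]
      nlinarith [l1_nonneg u]
    · have hNpos : (0 : ℝ) < (N : ℝ) := by exact_mod_cast hN
      have hNne : (N : ℝ) ≠ 0 := ne_of_gt hNpos
      have hbasic := hmin βstar
      have hexp : ytil - X *ᵥ βhat = r - X *ᵥ u := by
        have h : βhat = βstar + u := by rw [hu]; ring
        rw [h, mulVec_add, hr, sub_add_eq_sub_sub]
      rw [hexp, l2sq_sub] at hbasic
      have hcoef : (1 : ℝ) / (2 * (N : ℝ)) = (N : ℝ)⁻¹ / 2 := by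
        field_simp
      rw [hcoef] at hbasic
      have h1 : (N : ℝ)⁻¹ * l2sq (X *ᵥ u) ≤
          2 * ((N : ℝ)⁻¹ * (r ⬝ᵥ (X *ᵥ u))) + 2 * lam * (l1 βstar - l1 βhat) := by
        nlinarith [hbasic]
      have hvu : (N : ℝ)⁻¹ * (r ⬝ᵥ (X *ᵥ u)) = ((N : ℝ)⁻¹ • (Xᵀ *ᵥ r)) ⬝ᵥ u := by
        rw [smul_dotProduct, smul_eq_mul, ← dot_transpose]
      have hE1' : ((N : ℝ)⁻¹ • (Xᵀ *ᵥ r)) ⬝ᵥ u ≤ lam / 2 * l1 u :=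
        le_trans (dot_le_linf_l1 _ _)
          (mul_le_mul_of_nonneg_right hE1 (l1_nonneg u))
      rw [hQeq]
      rw [hvu] at h1
      linarith
  -- the three scalar inequalities
  have Hup : u ⬝ᵥ (((N : ℝ)⁻¹ • (Xᵀ * X)) *ᵥ u) ≤ 3 * lam * x - lam * w + 4 * lam * b := by
    have h2 : 2 * lam * (l1 βstar - l1 βhat) ≤ 2 * lam * (x + 2 * b - w) :=
      mul_le_mul_of_nonneg_left hdecomp (by positivity)
    rw [hlu] at hKEY
    linarith
  have H1 : κ * T - φ * (x + w) ^ 2 ≤ u ⬝ᵥ (((N : ℝ)⁻¹ • (Xᵀ * X)) *ᵥ u) := by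
    have := hRE u
    rwa [hlu] at this
  have H4 : x ^ 2 ≤ s * T := l1_restr_sq_le S u
  exact endgame lam κ φ s T x w b _ hlam hκ hφ hx0 hw0 hb0 hT0 hs0 hsparse hQ0 Hup H1 H4

end
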